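/- Let G = (V, ∼) be a finite VT⁺ graph, let W be a finite set, let ε > 0, and let M' : V → (V ⊕ W) → ℝ be a channel matrix satisfying ε-differential privacy with respect to ∼ such that M' i (inl i) = max_{h ∈ V} M' h (inl i) for every i ∈ V and M' i (inr w) = 0 for all i ∈ V, w ∈ W. Then there exists a channel matrix M'' : V → (V ⊕ W) → ℝ such that: (i) for every i ∈ V, M'' i (inl i) equals the maximum entry of M''; (ii) M'' i (inr w) = 0 for all i ∈ V, w ∈ W; (iii) M'' satisfies ε-differential privacy with respect to ∼; (iv) ∑_{b ∈ V ⊕ W} max_{i ∈ V} M'' i b = ∑_{b ∈ V ⊕ W} max_{i ∈ V} M' i b. -/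

import Mathlib

/-- A finite graph `G` with `n` vertices is `VT⁺` if there are `n` graph automorphisms
`σ_0, …, σ_{n-1}` such that for every vertex `x` the map `i ↦ σ_i x` is a bijection onto
the vertex set. -/
def IsVTPlus {V : Type*} [Fintype V] (G : SimpleGraph V) : Prop :=
  ∃ σ : Fin (Fintype.card V) → (G ≃g G),
    ∀ x : V, Function.Bijective fun i => (σ i) x

/-- **Step 2b of the matrix transformation.** Let `G` be a finite `VT⁺`
graph on `V`, and let `M'` be an `ε`-differentially private channel matrix (with output
alphabet `V ⊕ W`) whose column maxima are on the diagonal and whose last `|W|` columns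
are zero. Then there is an `ε`-differentially private channel matrix `M''` whose
diagonal entries all equal the global maximum entry, whose last `|W|` columns are zero,
and which has the same sum of column maxima (hence the same a posteriori min-entropy
under the uniform input distribution). -/
theorem dp_transform_vtPlus {V W : Type*} [Fintype V] [Fintype W]
    (G : SimpleGraph V) (hvt : IsVTPlus G)
    (ε : ℝ) (hε : 0 < ε) (M' : V → (V ⊕ W) → ℝ)
    (hnn : ∀ i b, 0 ≤ M' i b) (hrow : ∀ i, ∑ b, M' i b = 1)
    (hdp : ∀ i h, G.Adj i h → ∀ b, M' i b ≤ Real.exp ε * M' h b)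
    (hdiag : ∀ i h : V, M' h (Sum.inl i) ≤ M' i (Sum.inl i))
    (hzero : ∀ i w, M' i (Sum.inr w) = 0) :
    ∃ M'' : V → (V ⊕ W) → ℝ,
      (∀ i b, 0 ≤ M'' i b) ∧
      (∀ i, ∑ b, M'' i b = 1) ∧
      (∀ i h : V, ∀ b : V ⊕ W, M'' h b ≤ M'' i (Sum.inl i)) ∧
      (∀ i w, M'' i (Sum.inr w) = 0) ∧
      (∀ i h, G.Adj i h → ∀ b, M'' i b ≤ Real.exp ε * M'' h b) ∧
      (∑ b, ⨆ i, M'' i b) = (∑ b, ⨆ i, M' i b) := by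
  rcases isEmpty_or_nonempty V with hV | hV
  · exact ⟨M', hnn, hrow, fun i => isEmptyElim i, hzero, hdp, rfl⟩
  set n := Fintype.card V with hn'
  obtain ⟨σ, hσ⟩ := hvt
  have hn : 0 < (n : ℝ) := by exact_mod_cast Fintype.card_pos
  -- helper: sup of a function attaining max at j
  have hsup : ∀ (f : V → ℝ) (j : V), (∀ i, f i ≤ f j) → (⨆ i, f i) = f j := by
    intro f j h
    exact le_antisymm (ciSup_le h) (le_ciSup (Set.finite_range f).bddAbove j)
  -- key reindexing: sum over k of g(σ_k x) = sum over V of g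
  have hre : ∀ (x : V) (g : V → ℝ), ∑ k : Fin n, g ((σ k) x) = ∑ h : V, g h := by
    intro x g
    exact Fintype.sum_bijective _ (hσ x) _ _ (fun k => rfl)
  -- partial row sums of M'
  have hrow' : ∀ a : V, ∑ j : V, M' a (Sum.inl j) = 1 := by
    intro a
    have := hrow a
    rw [Fintype.sum_sum_type] at this
    simpa [hzero] using this
  set M'' : V → (V ⊕ W) → ℝ := fun i b =>
    Sum.casesOn b (fun j => (∑ k : Fin n, M' ((σ k) i) (Sum.inl ((σ k) j))) / n)
      (fun _ => 0) with hM''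
  have hdiagval : ∀ i : V, M'' i (Sum.inl i) = (∑ h : V, M' h (Sum.inl h)) / n := by
    intro i
    simp only [hM'']
    rw [hre i (fun h => M' h (Sum.inl h))]
  have hnn'' : ∀ i b, 0 ≤ M'' i b := by
    rintro i (j | w)
    · exact div_nonneg (Finset.sum_nonneg fun k _ => hnn _ _) hn.le
    · exact le_refl 0
  have hmax : ∀ i h : V, ∀ b : V ⊕ W, M'' h b ≤ M'' i (Sum.inl i) := by
    rintro i h (j | w)
    · rw [hdiagval i]
      have : ∀ k : Fin n, M' ((σ k) h) (Sum.inl ((σ k) j)) ≤ M' ((σ k) j) (Sum.inl ((σ k) j)) :=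
        fun k => hdiag _ _
      calc M'' h (Sum.inl j)
          ≤ (∑ k : Fin n, M' ((σ k) j) (Sum.inl ((σ k) j))) / n := by
            simp only [hM'']
            gcongr with k _
            exact this k
        _ = (∑ h : V, M' h (Sum.inl h)) / n := by
            rw [hre j (fun h => M' h (Sum.inl h))]
    · rw [hdiagval i]
      exact div_nonneg (Finset.sum_nonneg fun h _ => hnn _ _) hn.le
  have hrow'' : ∀ i, ∑ b, M'' i b = 1 := by
    intro i
    rw [Fintype.sum_sum_type]
    have : ∀ k : Fin n, ∑ j : V, M' ((σ k) i) (Sum.inl ((σ k) j)) = 1 := by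
      intro k
      rw [Fintype.sum_bijective _ ((σ k).toEquiv.bijective)
        (fun j => M' ((σ k) i) (Sum.inl ((σ k) j))) (fun j => M' ((σ k) i) (Sum.inl j))
        (fun j => rfl)]
      exact hrow' _
    simp only [hM'']
    rw [← Finset.sum_div, Finset.sum_comm]
    simp [this, hn.ne']
  have hdp'' : ∀ i h, G.Adj i h → ∀ b, M'' i b ≤ Real.exp ε * M'' h b := by
    rintro i h hadj (j | w)
    · simp only [hM'']
      rw [← mul_div_assoc, Finset.mul_sum]
      gcongr with k _
      exact hdp _ _ (((σ k).map_adj_iff).mpr hadj) _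
    · simp [hM'']
  have hsupl : ∀ j : V, (⨆ i, M'' i (Sum.inl j)) = M'' j (Sum.inl j) := by
    intro j
    exact hsup _ j (fun i => hmax j i (Sum.inl j))
  have hsupl' : ∀ j : V, (⨆ i, M' i (Sum.inl j)) = M' j (Sum.inl j) := by
    intro j
    exact hsup _ j (fun i => hdiag j i)
  have hsums : (∑ b, ⨆ i, M'' i b) = (∑ b, ⨆ i, M' i b) := by
    rw [Fintype.sum_sum_type, Fintype.sum_sum_type]
    have h1 : ∀ w : W, (⨆ i, M'' i (Sum.inr w)) = 0 := by
      intro w; simp [hM'']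
    have h2 : ∀ w : W, (⨆ i, M' i (Sum.inr w)) = 0 := by
      intro w; simp [hzero]
    simp only [h1, h2, hsupl, hsupl', hdiagval, Finset.sum_const, smul_eq_mul]
    rw [Finset.card_univ]
    simp only [nsmul_eq_mul, mul_zero, add_zero]
    rw [hn']
    field_simp
  exact ⟨M'', hnn'', hrow'', hmax, fun i w => rfl, hdp'', hsums⟩
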